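/- Let ψ : V → Ṽ be a similarity of ratio c between quadratic spaces (V,Q) and (Ṽ,Q̃), i.e. a linear bijection with c·Q(x) = Q̃(ψ(x)) for all x. Then there exists a unique algebra homomorphism Cl₀(ψ) : Cl₀(V,Q) → Cl₀(Ṽ,Q̃) between the even Clifford subalgebras such that Cl₀(ψ)(x·y) = c⁻¹·ψ(x)·ψ(y) for all x, y ∈ V. -/

import Mathlib

/-- A similarity `ψ` of ratio `c` between quadratic spaces induces a unique algebra
homomorphism between the even Clifford subalgebras with
`Cl₀(ψ)(x·y) = c⁻¹·ψ(x)·ψ(y)`. -/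
theorem even_clifford_hom_of_similarity {F V W : Type*} [Field F]
    [AddCommGroup V] [Module F V] [AddCommGroup W] [Module F W]
    (Q : QuadraticForm F V) (Q' : QuadraticForm F W)
    (ψ : V ≃ₗ[F] W) (c : F) (hc : c ≠ 0) (hψ : ∀ x : V, c * Q x = Q' (ψ x)) :
    ∃! f : CliffordAlgebra.even Q →ₐ[F] CliffordAlgebra.even Q',
      ∀ x y : V,
        (f ⟨CliffordAlgebra.ι Q x * CliffordAlgebra.ι Q y,
            CliffordAlgebra.ι_mul_ι_mem_evenOdd_zero Q x y⟩ : CliffordAlgebra Q') =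
          c⁻¹ • (CliffordAlgebra.ι Q' (ψ x) * CliffordAlgebra.ι Q' (ψ y)) := by
  classical
  set ιmul : V →ₗ[F] V →ₗ[F] CliffordAlgebra.even Q' :=
    LinearMap.mk₂ F
      (fun m₁ m₂ => (⟨c⁻¹ • (CliffordAlgebra.ι Q' (ψ m₁) * CliffordAlgebra.ι Q' (ψ m₂)),
        Submodule.smul_mem _ _ (CliffordAlgebra.ι_mul_ι_mem_evenOdd_zero Q' _ _)⟩ :
          CliffordAlgebra.even Q'))
      (fun m₁ m₂ m₃ => Subtype.ext <| by
        simp only [map_add, add_mul, smul_add]; rfl)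
      (fun r m₁ m₂ => Subtype.ext <| by
        simp only [map_smul, smul_mul_assoc]; rw [smul_comm]; rfl)
      (fun m₁ m₂ m₃ => Subtype.ext <| by
        simp only [map_add, mul_add, smul_add]; rfl)
      (fun r m₁ m₂ => Subtype.ext <| by
        simp only [map_smul, mul_smul_comm]; rw [smul_comm]; rfl) with hιmul
  have key : ∀ m : V, CliffordAlgebra.ι Q' (ψ m) * CliffordAlgebra.ι Q' (ψ m)
      = (c * Q m) • (1 : CliffordAlgebra Q') := by
    intro m
    rw [CliffordAlgebra.ι_sq_scalar, hψ, Algebra.algebraMap_eq_smul_one]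
  set g : CliffordAlgebra.EvenHom Q (CliffordAlgebra.even Q') :=
    { bilin := ιmul
      contract := fun m => Subtype.ext <| by
        show c⁻¹ • (CliffordAlgebra.ι Q' (ψ m) * CliffordAlgebra.ι Q' (ψ m)) = _
        rw [key, smul_smul, Algebra.algebraMap_eq_smul_one]
        congr 1
        field_simp
      contract_mid := fun m₁ m₂ m₃ => Subtype.ext <| by
        show (c⁻¹ • _) * (c⁻¹ • _) = Q m₂ • (c⁻¹ • _)
        rw [smul_mul_smul_comm, smul_smul]
        rw [show CliffordAlgebra.ι Q' (ψ m₁) * CliffordAlgebra.ι Q' (ψ m₂) *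
              (CliffordAlgebra.ι Q' (ψ m₂) * CliffordAlgebra.ι Q' (ψ m₃)) =
            CliffordAlgebra.ι Q' (ψ m₁) * (CliffordAlgebra.ι Q' (ψ m₂) *
              CliffordAlgebra.ι Q' (ψ m₂)) * CliffordAlgebra.ι Q' (ψ m₃) by
          simp only [mul_assoc]]
        rw [key, mul_smul_comm, mul_one, smul_mul_assoc, smul_smul]
        congr 1
        field_simp }
  refine ⟨CliffordAlgebra.even.lift Q g, fun x y => ?_, fun f hf => ?_⟩
  · have h1 : (⟨CliffordAlgebra.ι Q x * CliffordAlgebra.ι Q y,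
        CliffordAlgebra.ι_mul_ι_mem_evenOdd_zero Q x y⟩ : CliffordAlgebra.even Q) =
        (CliffordAlgebra.even.ι Q).bilin x y := rfl
    rw [h1, CliffordAlgebra.even.lift_ι]
    rfl
  · refine CliffordAlgebra.even.algHom_ext Q ?_
    ext x y
    show (f ((CliffordAlgebra.even.ι Q).bilin x y) : CliffordAlgebra Q') =
      ((CliffordAlgebra.even.lift Q g) ((CliffordAlgebra.even.ι Q).bilin x y) :
        CliffordAlgebra Q')
    have h1 : ((CliffordAlgebra.even.ι Q).bilin x y) =
        (⟨CliffordAlgebra.ι Q x * CliffordAlgebra.ι Q y,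
          CliffordAlgebra.ι_mul_ι_mem_evenOdd_zero Q x y⟩ : CliffordAlgebra.even Q) := rfl
    rw [h1, hf x y, ← h1, CliffordAlgebra.even.lift_ι]
    rfl
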